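/- If u : ℝ₊^m → ℝ is continuous and non-decreasing, then for every bundle x ∈ ℝ₊^m there exists a parsimonious bundle y ≤ x with u(y) = u(x); that is, y satisfies u(z) < u(y) for every z ∈ ℝ₊^m with z ≤ y and z ≠ y. -/

import Mathlib

open scoped NNReal

/-- A bundle is a vector of nonnegative reals. -/
abbrev Bundle (m : ℕ) := Fin m → ℝ≥0

/-- A bundle `x` is parsimonious for `u` if every `z ≤ x` with `z ≠ x` has strictly
smaller utility. -/
def Parsimonious {m : ℕ} (u : Bundle m → ℝ) (x : Bundle m) : Prop :=
  ∀ z : Bundle m, z ≤ x → z ≠ x → u z < u x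

theorem exists_parsimonious_le {m : ℕ} (u : Bundle m → ℝ)
    (hcont : Continuous u) (hmono : Monotone u) (x : Bundle m) :
    ∃ y : Bundle m, y ≤ x ∧ u y = u x ∧ Parsimonious u y := by
  classical
  set S : Set (Bundle m) := {y | y ≤ x ∧ u y = u x} with hSdef
  have hSeq : S = Set.Icc 0 x ∩ u ⁻¹' {u x} := by
    ext y
    simp only [hSdef, Set.mem_setOf_eq, Set.mem_inter_iff, Set.mem_Icc,
      Set.mem_preimage, Set.mem_singleton_iff]
    exact ⟨fun h => ⟨⟨fun i => zero_le, h.1⟩, h.2⟩, fun h => ⟨h.1.2, h.2⟩⟩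
  have hSc : IsCompact S := by
    rw [hSeq]
    exact isCompact_Icc.inter_right (isClosed_singleton.preimage hcont)
  have hne : S.Nonempty := ⟨x, le_refl x, rfl⟩
  have hf : Continuous (fun y : Bundle m => ∑ i, (y i : ℝ)) := by
    exact continuous_finset_sum _ fun i _ =>
      (NNReal.continuous_coe).comp (continuous_apply i)
  obtain ⟨y, hyS, hmin⟩ := hSc.exists_isMinOn hne hf.continuousOn
  refine ⟨y, hyS.1, hyS.2, ?_⟩
  intro z hz hzne
  rcases lt_or_eq_of_le (hmono hz) with h | h
  · exact h
  · exfalso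
    have hzS : z ∈ S := ⟨le_trans hz hyS.1, h.symm ▸ hyS.2⟩
    have hsum : (∑ i, (z i : ℝ)) < ∑ i, (y i : ℝ) := by
      obtain ⟨i, hi⟩ := Function.ne_iff.mp hzne
      exact Finset.sum_lt_sum (fun j _ => by exact_mod_cast hz j)
        ⟨i, Finset.mem_univ i, by exact_mod_cast lt_of_le_of_ne (hz i) hi⟩
    exact absurd (hmin hzS) (not_le.mpr hsum)
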